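/- Let G = (V,E) be a profinite graph satisfying property (⋆). Then G contains no path of length greater than one: there are no pairwise distinct vertices a, b, c ∈ V with (a,b) ∈ E and (b,c) ∈ E. -/

import Mathlib

/-- A map `f` is a quotient map of graphs from `(A, EA)` to `(B, EB)`: it is
surjective, edge-preserving, and strict (every adjacent pair in the target
lifts to an adjacent pair in the source). -/
def GraphQuotient {A B : Type*} (EA : A → A → Prop) (EB : B → B → Prop)
    (f : A → B) : Prop :=
  Function.Surjective f ∧ (∀ x y, EA x y → EB (f x) (f y)) ∧
    ∀ a b, EB a b → ∃ x y, EA x y ∧ f x = a ∧ f y = b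

/-- Property (⋆) for a topological graph `(V, E)`: for all nonempty finite
graphs S, T, every continuous (equivalently, locally constant, since S is
finite discrete) quotient map f : V → S and every quotient map q : T → S,
there is a continuous quotient map g : V → T with q ∘ g = f. -/
def StarProp {V : Type*} [TopologicalSpace V] (E : V → V → Prop) : Prop :=
  ∀ (S T : Type) (_ : Finite S) (_ : Nonempty S) (_ : Finite T) (_ : Nonempty T)
    (ES : S → S → Prop) (ET : T → T → Prop),
    (∀ s, ES s s) → (∀ a b, ES a b → ES b a) →
    (∀ t, ET t t) → (∀ a b, ET a b → ET b a) →
    ∀ f : V → S, IsLocallyConstant f → GraphQuotient E ES f →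
    ∀ q : T → S, GraphQuotient ET ES q →
    ∃ g : V → T, IsLocallyConstant g ∧ GraphQuotient E ET g ∧ q ∘ g = f

/-- Let G = (V,E) be a profinite graph satisfying property (⋆).
Then G contains no path of length greater than one: there are no pairwise
distinct vertices a, b, c with (a,b) ∈ E and (b,c) ∈ E. -/
theorem stmt_6 {V : Type*} [TopologicalSpace V] [CompactSpace V]
    [TopologicalSpace.MetrizableSpace V] [TotallyDisconnectedSpace V] [Nonempty V]
    (E : V → V → Prop)
    (hclosed : IsClosed {p : V × V | E p.1 p.2})
    (hrefl : ∀ x, E x x)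
    (hsymm : ∀ x y, E x y → E y x)
    (hstar : StarProp E) :
    ∀ a b c : V, a ≠ b → b ≠ c → a ≠ c → E a b → E b c → False := by
  classical
  haveI : TotallySeparatedSpace V := loc_compact_t2_tot_disc_iff_tot_sep.mp ‹_›
  intro a b c hab hbc hac Eab Ebc
  obtain ⟨U1, hU1, ha1, hb1⟩ := exists_isClopen_of_totally_separated hab
  obtain ⟨U2, hU2, ha2, hc2⟩ := exists_isClopen_of_totally_separated hac
  obtain ⟨W0, hW0, hbW, hcW⟩ := exists_isClopen_of_totally_separated hbc
  set A : Set V := U1 ∩ U2 with hAdef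
  have hA : IsClopen A := hU1.inter hU2
  have haA : a ∈ A := ⟨ha1, ha2⟩
  have hbA : b ∉ A := fun h => hb1 h.1
  have hcA : c ∉ A := fun h => hc2 h.2
  set f : V → Fin 3 := fun x => if x ∈ A then 0 else if x ∈ W0 then 1 else 2 with hfdef
  have hfa : f a = 0 := by simp [hfdef, haA]
  have hfb : f b = 1 := by simp [hfdef, hbA, hbW]
  have hfc : f c = 2 := by simp [hfdef, hcA, show c ∉ W0 from hcW]
  have hlc : IsLocallyConstant f := by
    rw [IsLocallyConstant.iff_isOpen_fiber]
    intro y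
    fin_cases y
    · have : (f ⁻¹' {⟨0, by norm_num⟩}) = A := by
        ext x; simp only [Set.mem_preimage, Set.mem_singleton_iff, hfdef]
        split_ifs <;> simp_all
      show IsOpen (f ⁻¹' {_}); rw [this]; exact hA.isOpen
    · have : (f ⁻¹' {⟨1, by norm_num⟩}) = W0 ∩ Aᶜ := by
        ext x; simp only [Set.mem_preimage, Set.mem_singleton_iff, hfdef,
          Set.mem_inter_iff, Set.mem_compl_iff]
        split_ifs <;> simp_all
      show IsOpen (f ⁻¹' {_}); rw [this]
      exact hW0.isOpen.inter hA.compl.isOpen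
    · have : (f ⁻¹' {⟨2, by norm_num⟩}) = Aᶜ ∩ W0ᶜ := by
        ext x; simp only [Set.mem_preimage, Set.mem_singleton_iff, hfdef,
          Set.mem_inter_iff, Set.mem_compl_iff]
        split_ifs <;> simp_all
      show IsOpen (f ⁻¹' {_}); rw [this]
      exact hA.compl.isOpen.inter hW0.compl.isOpen
  -- induced edge relation on S = Fin 3
  set ES : Fin 3 → Fin 3 → Prop := fun s t => ∃ x y, E x y ∧ f x = s ∧ f y = t with hESdef
  have hfsurj : Function.Surjective f := by
    intro s
    fin_cases s
    · exact ⟨a, hfa⟩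
    · exact ⟨b, hfb⟩
    · exact ⟨c, hfc⟩
  have hESrefl : ∀ s, ES s s := by
    intro s; obtain ⟨x, hx⟩ := hfsurj s; exact ⟨x, x, hrefl x, hx, hx⟩
  have hESsymm : ∀ s t, ES s t → ES t s := by
    rintro s t ⟨x, y, hxy, rfl, rfl⟩; exact ⟨y, x, hsymm _ _ hxy, rfl, rfl⟩
  have hfquot : GraphQuotient E ES f :=
    ⟨hfsurj, fun x y h => ⟨x, y, h, rfl, rfl⟩, fun s t h => h⟩
  -- T = Fin 4, q : 0↦0, 1↦1, 2↦1, 3↦2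
  set q : Fin 4 → Fin 3 := ![0, 1, 1, 2] with hqdef
  set ET : Fin 4 → Fin 4 → Prop := fun t t' => ES (q t) (q t') ∧
    ¬(t = 0 ∧ t' = 2) ∧ ¬(t = 2 ∧ t' = 0) ∧ ¬(t = 1 ∧ t' = 3) ∧
    ¬(t = 3 ∧ t' = 1) ∧ ¬(t = 1 ∧ t' = 2) ∧ ¬(t = 2 ∧ t' = 1) with hETdef
  have hETrefl : ∀ t, ET t t := by
    intro t
    refine ⟨hESrefl _, ?_, ?_, ?_, ?_, ?_, ?_⟩ <;> rintro ⟨rfl, h⟩ <;> exact absurd h (by decide)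
  have hETsymm : ∀ t t', ET t t' → ET t' t := by
    rintro t t' ⟨h, h1, h2, h3, h4, h5, h6⟩
    exact ⟨hESsymm _ _ h, fun ⟨x, y⟩ => h2 ⟨y, x⟩, fun ⟨x, y⟩ => h1 ⟨y, x⟩,
      fun ⟨x, y⟩ => h4 ⟨y, x⟩, fun ⟨x, y⟩ => h3 ⟨y, x⟩,
      fun ⟨x, y⟩ => h6 ⟨y, x⟩, fun ⟨x, y⟩ => h5 ⟨y, x⟩⟩
  have hqquot : GraphQuotient ET ES q := by
    refine ⟨?_, fun t t' h => h.1, ?_⟩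
    · intro s; fin_cases s
      · exact ⟨0, rfl⟩
      · exact ⟨1, rfl⟩
      · exact ⟨3, rfl⟩
    · intro s s' h
      fin_cases s <;> fin_cases s'
      · exact ⟨0, 0, ⟨h, by decide, by decide, by decide, by decide, by decide, by decide⟩, rfl, rfl⟩
      · exact ⟨0, 1, ⟨h, by decide, by decide, by decide, by decide, by decide, by decide⟩, rfl, rfl⟩
      · exact ⟨0, 3, ⟨h, by decide, by decide, by decide, by decide, by decide, by decide⟩, rfl, rfl⟩
      · exact ⟨1, 0, ⟨h, by decide, by decide, by decide, by decide, by decide, by decide⟩, rfl, rfl⟩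
      · exact ⟨1, 1, ⟨h, by decide, by decide, by decide, by decide, by decide, by decide⟩, rfl, rfl⟩
      · exact ⟨2, 3, ⟨h, by decide, by decide, by decide, by decide, by decide, by decide⟩, rfl, rfl⟩
      · exact ⟨3, 0, ⟨h, by decide, by decide, by decide, by decide, by decide, by decide⟩, rfl, rfl⟩
      · exact ⟨3, 2, ⟨h, by decide, by decide, by decide, by decide, by decide, by decide⟩, rfl, rfl⟩
      · exact ⟨3, 3, ⟨h, by decide, by decide, by decide, by decide, by decide, by decide⟩, rfl, rfl⟩
  obtain ⟨g, hglc, ⟨hgsurj, hgedge, hgstrict⟩, hqg⟩ :=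
    hstar (Fin 3) (Fin 4) inferInstance inferInstance inferInstance inferInstance
      ES ET hESrefl hESsymm hETrefl hETsymm f hlc hfquot q hqquot
  have hqa : q (g a) = 0 := by have := congrFun hqg a; simpa [hfa] using this
  have hqb : q (g b) = 1 := by have := congrFun hqg b; simpa [hfb] using this
  have hqc : q (g c) = 2 := by have := congrFun hqg c; simpa [hfc] using this
  have hga : g a = 0 := by
    have : ∀ t : Fin 4, q t = 0 → t = 0 := by decide
    exact this _ hqa
  have hgc : g c = 3 := by
    have : ∀ t : Fin 4, q t = 2 → t = 3 := by decide
    exact this _ hqc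
  have hgb : g b = 1 ∨ g b = 2 := by
    have : ∀ t : Fin 4, q t = 1 → t = 1 ∨ t = 2 := by decide
    exact this _ hqb
  have h1 : ET (g a) (g b) := hgedge _ _ Eab
  have h2 : ET (g b) (g c) := hgedge _ _ Ebc
  rcases hgb with h | h
  · exact h2.2.2.2.1 ⟨h.symm ▸ rfl, hgc⟩
  · exact h1.2.1 ⟨hga, h⟩
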